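/- For even n ≥ 2, β_π is an n-cycle: the orbit of 1 under β_π is all of {1,...,n}. -/
import Mathlib


/-- The permutator `β_π` on `{1,…,n}` (1-indexed): `β_π(1)=2`, `β_π(n)=n-1`,
and `β_π(i)=i+2·(-1)^i` for `1<i<n`. -/
def betaPi (n : ℕ) (i : ℕ) : ℕ :=
  if i = 1 then 2 else if i = n then n - 1 else if Even i then i + 2 else i - 2

/-- For even `n ≥ 2`, `β_π` is an `n`-cycle: the orbit of `1` is all of `{1,…,n}`. -/
theorem betaPi_cycle (n : ℕ) (hn : 2 ≤ n) (heven : Even n) :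
    ∀ j ∈ Set.Icc 1 n, ∃ k < n, (betaPi n)^[k] 1 = j := by
  have hmod : n % 2 = 0 := Nat.even_iff.mp heven
  have lemA : ∀ k, 1 ≤ k → 2 * k ≤ n → (betaPi n)^[k] 1 = 2 * k := by
    intro k hk
    induction k, hk using Nat.le_induction with
    | base => intro _; simp [betaPi]
    | succ k hk ih =>
      intro h2
      rw [Function.iterate_succ_apply', ih (by omega)]
      have h1 : 2 * k ≠ 1 := by omega
      have h2' : 2 * k ≠ n := by omega
      have he : Even (2 * k) := even_two_mul k
      simp only [betaPi, if_neg h1, if_neg h2', if_pos he]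
      omega
  have lemB : ∀ m, 1 ≤ m → m ≤ n / 2 - 1 → (betaPi n)^[n / 2 + m] 1 = n + 1 - 2 * m := by
    intro m hm1
    induction m, hm1 using Nat.le_induction with
    | base =>
      intro hm
      rw [Function.iterate_succ_apply', lemA (n / 2) (by omega) (by omega)]
      have h2 : 2 * (n / 2) = n := by omega
      have h1 : n ≠ 1 := by omega
      rw [h2]
      simp [betaPi, h1]
    | succ m hm ih =>
      intro hm2
      have hstep : n / 2 + (m + 1) = (n / 2 + m) + 1 := by omega
      rw [hstep, Function.iterate_succ_apply', ih (by omega)]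
      have h1 : n + 1 - 2 * m ≠ 1 := by omega
      have h2 : n + 1 - 2 * m ≠ n := by omega
      have ho : ¬ Even (n + 1 - 2 * m) := by rw [Nat.even_iff]; omega
      simp only [betaPi, if_neg h1, if_neg h2, if_neg ho]
      omega
  intro j hj
  simp only [Set.mem_Icc] at hj
  rcases Nat.even_or_odd j with hje | hjo
  · have hjm : j % 2 = 0 := Nat.even_iff.mp hje
    refine ⟨j / 2, by omega, ?_⟩
    rw [lemA (j / 2) (by omega) (by omega)]
    omega
  · have hjm : j % 2 = 1 := Nat.odd_iff.mp hjo
    by_cases hj1 : j = 1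
    · exact ⟨0, by omega, by simp [hj1]⟩
    · refine ⟨n / 2 + (n + 1 - j) / 2, by omega, ?_⟩
      rw [lemB ((n + 1 - j) / 2) (by omega) (by omega)]
      omega
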